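/- Let N ≥ 2 be an integer, let σ > 0, μ > 0, and τ ≥ 0 be real numbers, and set K = N−1. Let A₁ = −(N·σ/(N−1))·(I − (1/N)·J_K) and A₂ = A₁ − μ·I (both are invertible K×K matrices), and let β₁ = (1/(N−1))·𝟙ᵀ. Then the expected out-of-sync duration of a cycle for the single-threshold policy on a symmetric N-state source satisfies β₁·exp(τ•A₁)·(A₁⁻¹ − A₂⁻¹)·𝟙 − β₁·A₁⁻¹·𝟙 = (1 − e^{−σ·τ/(N−1)})·(N−1)/σ + e^{−σ·τ/(N−1)}·(N−1)/(σ + μ·(N−1)). -/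

import Mathlib

open Matrix

/-- The all-ones column vector. -/
noncomputable def onesCol (K : ℕ) : Matrix (Fin K) (Fin 1) ℝ := Matrix.of fun _ _ => 1

/-- The all-ones row vector. -/
noncomputable def onesRow (K : ℕ) : Matrix (Fin 1) (Fin K) ℝ := Matrix.of fun _ _ => 1

/-- The all-ones square matrix. -/
noncomputable def onesMat (K : ℕ) : Matrix (Fin K) (Fin K) ℝ := Matrix.of fun _ _ => 1

set_option maxHeartbeats 1000000

lemma exp_mul_eig {K : ℕ} (M : Matrix (Fin K) (Fin K) ℝ) (v : Matrix (Fin K) (Fin 1) ℝ)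
    (lam : ℝ) (h : M * v = lam • v) :
    NormedSpace.exp M * v = Real.exp lam • v := by
  letI : SeminormedRing (Matrix (Fin K) (Fin K) ℝ) := Matrix.linftyOpSemiNormedRing
  letI : NormedRing (Matrix (Fin K) (Fin K) ℝ) := Matrix.linftyOpNormedRing
  letI : NormedAlgebra ℝ (Matrix (Fin K) (Fin K) ℝ) := Matrix.linftyOpNormedAlgebra
  have hpow : ∀ n : ℕ, M ^ n * v = lam ^ n • v := by
    intro n
    induction n with
    | zero => simp
    | succ n ih =>
      rw [pow_succ, pow_succ, Matrix.mul_assoc, h, Matrix.mul_smul, ih, smul_smul, mul_comm]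
  have hsum : Summable fun n : ℕ => ((Nat.factorial n : ℝ))⁻¹ • M ^ n :=
    NormedSpace.expSeries_summable' M
  let L : Matrix (Fin K) (Fin K) ℝ →ₗ[ℝ] Matrix (Fin K) (Fin 1) ℝ :=
    { toFun := fun X => X * v
      map_add' := fun X Y => Matrix.add_mul X Y v
      map_smul' := fun c X => Matrix.smul_mul c X v }
  let Lc : Matrix (Fin K) (Fin K) ℝ →L[ℝ] Matrix (Fin K) (Fin 1) ℝ :=
    ⟨L, L.continuous_of_finiteDimensional⟩
  have hmap : NormedSpace.exp M * v = ∑' n : ℕ, (((Nat.factorial n : ℝ))⁻¹ • M ^ n) * v := by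
    rw [NormedSpace.exp_eq_tsum (𝕂 := ℝ)]
    exact Lc.map_tsum hsum
  rw [hmap]
  have : ∀ n : ℕ, (((Nat.factorial n : ℝ))⁻¹ • M ^ n) * v
      = (((Nat.factorial n : ℝ))⁻¹ * lam ^ n) • v := by
    intro n
    rw [Matrix.smul_mul, hpow, smul_smul]
  simp_rw [this]
  rw [Summable.tsum_smul_const ?_]
  · congr 1
    rw [Real.exp_eq_exp_ℝ, NormedSpace.exp_eq_tsum (𝕂 := ℝ)]
    simp [smul_eq_mul]
  · exact (Real.summable_pow_div_factorial lam).congr fun n => by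
      rw [div_eq_mul_inv, mul_comm]

/-- Expected out-of-sync duration of a cycle for the ST policy on a symmetric
`N`-state source. -/
theorem st_symmetric_duration (N : ℕ) (hN : 2 ≤ N)
    (σ μ τ : ℝ) (hσ : 0 < σ) (hμ : 0 < μ) (hτ : 0 ≤ τ)
    (A₁ A₂ : Matrix (Fin (N - 1)) (Fin (N - 1)) ℝ)
    (hA₁ : A₁ = (-((N : ℝ) * σ / ((N : ℝ) - 1))) •
        ((1 : Matrix (Fin (N - 1)) (Fin (N - 1)) ℝ) - ((1 : ℝ) / (N : ℝ)) • onesMat (N - 1)))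
    (hA₂ : A₂ = A₁ - μ • (1 : Matrix (Fin (N - 1)) (Fin (N - 1)) ℝ))
    (β₁ : Matrix (Fin 1) (Fin (N - 1)) ℝ)
    (hβ₁ : β₁ = (1 / ((N : ℝ) - 1)) • onesRow (N - 1)) :
    IsUnit A₁ ∧ IsUnit A₂ ∧
    (β₁ * NormedSpace.exp (τ • A₁) * (A₁⁻¹ - A₂⁻¹) * onesCol (N - 1)) 0 0
        - (β₁ * A₁⁻¹ * onesCol (N - 1)) 0 0
      = (1 - Real.exp (-(σ * τ) / ((N : ℝ) - 1))) * ((N : ℝ) - 1) / σ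
        + Real.exp (-(σ * τ) / ((N : ℝ) - 1)) * ((N : ℝ) - 1) / (σ + μ * ((N : ℝ) - 1)) := by
  set Kr : ℝ := (N : ℝ) - 1 with hKrdef
  have hN2 : (2 : ℝ) ≤ (N : ℝ) := by exact_mod_cast hN
  have hKrpos : 0 < Kr := by simp [hKrdef]; linarith
  have hKr0 : Kr ≠ 0 := ne_of_gt hKrpos
  have hNpos : (0 : ℝ) < (N : ℝ) := by linarith
  have hN0 : (N : ℝ) ≠ 0 := ne_of_gt hNpos
  set a : ℝ := -((N : ℝ) * σ / Kr) with hadef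
  have haneg : a < 0 := by
    rw [hadef]
    have : 0 < (N : ℝ) * σ / Kr := by positivity
    linarith
  have ha0 : a ≠ 0 := ne_of_lt haneg
  have hamu : a - μ ≠ 0 := by nlinarith
  have haN : a - (N : ℝ) * μ ≠ 0 := by nlinarith
  have hsmu : σ + μ * Kr ≠ 0 := by nlinarith
  have hcard : ((N - 1 : ℕ) : ℝ) = Kr := by
    rw [hKrdef]; push_cast [Nat.cast_sub (by omega : 1 ≤ N)]; ring
  -- basic facts about the ones matrices
  have hPP : onesMat (N - 1) * onesMat (N - 1) = Kr • onesMat (N - 1) := by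
    ext i j
    simp [onesMat, Matrix.mul_apply, hcard]
  have hPv : onesMat (N - 1) * onesCol (N - 1) = Kr • onesCol (N - 1) := by
    ext i j
    simp [onesMat, onesCol, Matrix.mul_apply, hcard]
  have hβv : (β₁ * onesCol (N - 1)) 0 0 = 1 := by
    rw [hβ₁]
    simp [onesRow, onesCol, Matrix.mul_apply, hcard, ← hKrdef]
    field_simp
  -- explicit inverses
  set B₁ : Matrix (Fin (N - 1)) (Fin (N - 1)) ℝ :=
    a⁻¹ • (1 + onesMat (N - 1)) with hB₁def
  set B₂ : Matrix (Fin (N - 1)) (Fin (N - 1)) ℝ :=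
    (a - μ)⁻¹ • (1 + (a / (a - (N : ℝ) * μ)) • onesMat (N - 1)) with hB₂def
  have hA₁' : A₁ = a • (1 : Matrix (Fin (N - 1)) (Fin (N - 1)) ℝ)
      - (a / (N : ℝ)) • onesMat (N - 1) := by
    rw [hA₁]
    match_scalars <;> field_simp
  have h1 : A₁ * B₁ = 1 := by
    rw [hA₁', hB₁def]
    simp only [Matrix.smul_mul, Matrix.mul_smul, sub_mul, mul_add, mul_one, one_mul,
      smul_add, smul_sub, smul_smul, hPP]
    match_scalars <;> field_simp <;> ring
  have hA₂' : A₂ = (a - μ) • (1 : Matrix (Fin (N - 1)) (Fin (N - 1)) ℝ)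
      - (a / (N : ℝ)) • onesMat (N - 1) := by
    rw [hA₂, hA₁']
    module
  have haN' : a - μ * (N : ℝ) ≠ 0 := by rw [mul_comm]; exact haN
  have h2 : A₂ * B₂ = 1 := by
    rw [hA₂', hB₂def]
    simp only [Matrix.smul_mul, Matrix.mul_smul, sub_mul, mul_add, mul_one, one_mul,
      smul_add, smul_sub, smul_smul, hPP]
    match_scalars <;> field_simp <;> ring
  have hu₁ : IsUnit A₁ := ⟨⟨A₁, B₁, h1, mul_eq_one_comm.mp h1⟩, rfl⟩
  have hu₂ : IsUnit A₂ := ⟨⟨A₂, B₂, h2, mul_eq_one_comm.mp h2⟩, rfl⟩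
  have hinv₁ : A₁⁻¹ = B₁ := Matrix.inv_eq_right_inv h1
  have hinv₂ : A₂⁻¹ = B₂ := Matrix.inv_eq_right_inv h2
  refine ⟨hu₁, hu₂, ?_⟩
  -- eigenvalue computations
  set c₁ : ℝ := -(Kr / σ) with hc₁def
  set c₂ : ℝ := -(Kr / (σ + μ * Kr)) with hc₂def
  have hB₁v : B₁ * onesCol (N - 1) = c₁ • onesCol (N - 1) := by
    rw [hB₁def, Matrix.smul_mul, Matrix.add_mul, Matrix.one_mul, hPv]
    match_scalars
    rw [hc₁def, hadef]
    field_simp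
    ring
  have hlam₂ : -(σ / Kr) - μ ≠ 0 := by
    have : 0 < σ / Kr := by positivity
    intro h; nlinarith
  have hA₂v : A₂ * onesCol (N - 1) = (-(σ / Kr) - μ) • onesCol (N - 1) := by
    rw [hA₂', Matrix.sub_mul, Matrix.smul_mul, Matrix.smul_mul, Matrix.one_mul, hPv, smul_smul]
    match_scalars
    rw [hadef]
    field_simp
    ring
  have hB₂v : B₂ * onesCol (N - 1) = c₂ • onesCol (N - 1) := by
    have hBA := mul_eq_one_comm.mp h2
    have hv : (-(σ / Kr) - μ) • (B₂ * onesCol (N - 1)) = onesCol (N - 1) := by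
      rw [← Matrix.mul_smul, ← hA₂v, ← Matrix.mul_assoc, hBA, Matrix.one_mul]
    have hv2 := congrArg (fun X => (-(σ / Kr) - μ)⁻¹ • X) hv
    simp only [smul_smul, inv_mul_cancel₀ hlam₂, one_smul] at hv2
    rw [hv2]
    have h : -(σ / Kr) - μ = -((σ + μ * Kr) / Kr) := by field_simp; ring
    rw [hc₂def, h, inv_neg, inv_div]
  set e : ℝ := Real.exp (-(σ * τ) / Kr) with hedef
  have hexp : NormedSpace.exp (τ • A₁) * onesCol (N - 1) = e • onesCol (N - 1) := by
    refine exp_mul_eig _ _ _ ?_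
    rw [Matrix.smul_mul, hA₁']
    simp only [Matrix.sub_mul, Matrix.smul_mul, Matrix.one_mul, hPv, smul_smul, smul_sub]
    match_scalars
    rw [hadef]
    field_simp
    ring
  have key1 : β₁ * NormedSpace.exp (τ • A₁) * (A₁⁻¹ - A₂⁻¹) * onesCol (N - 1)
      = ((c₁ - c₂) * e) • (β₁ * onesCol (N - 1)) := by
    rw [hinv₁, hinv₂, Matrix.mul_assoc, Matrix.mul_assoc, Matrix.sub_mul, hB₁v, hB₂v,
      ← sub_smul, Matrix.mul_smul, hexp, smul_smul, Matrix.mul_smul]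
  have key2 : β₁ * A₁⁻¹ * onesCol (N - 1) = c₁ • (β₁ * onesCol (N - 1)) := by
    rw [hinv₁, Matrix.mul_assoc, hB₁v, Matrix.mul_smul]
  rw [key1, key2, Matrix.smul_apply, Matrix.smul_apply, hβv, smul_eq_mul, smul_eq_mul,
    mul_one, mul_one, hc₁def, hc₂def]
  have hσ0 : σ ≠ 0 := ne_of_gt hσ
  field_simp
  ring
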